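/- Let ρ be a state and Π_A an observable on ℂ^D. Then as T → ∞ the time average (1/(2T)) · ∫_{−T}^{T} Tr(ρ(t) Π_A) dt converges, and its limit equals Σ_{(n,m) : E n = E m} ⟨e n, ρ (e m)⟩ · ⟨e m, Π_A (e n)⟩, the sum ranging over all pairs n, m ∈ Fin D with equal eigenvalues E n = E m (including n = m). -/

import Mathlib

open MeasureTheory Filter
open scoped ComplexOrder

namespace QET

variable {D : ℕ}

/-- `exp(-itH)` for the Hamiltonian `H = Σ_n (E n) • P_n`, where `P_n` is the orthogonal
projection onto the `n`-th vector of the fixed orthonormal eigenbasis `e`.  All operators are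
written as matrices in this eigenbasis, so `H` is diagonal and
`exp(-itH) = diag (exp (-i t E n))`. -/
noncomputable def U (E : Fin D → ℝ) (t : ℝ) : Matrix (Fin D) (Fin D) ℂ :=
  Matrix.diagonal fun n => Complex.exp (-(Complex.I) * t * (E n))

/-- Time evolution `X(t) = exp(-itH) · X · exp(itH)`. -/
noncomputable def evolve (E : Fin D → ℝ) (t : ℝ) (X : Matrix (Fin D) (Fin D) ℂ) :
    Matrix (Fin D) (Fin D) ℂ :=
  U E t * X * U E (-t)

/-- A state: a positive semidefinite operator with unit trace. -/
def IsState (ρ : Matrix (Fin D) (Fin D) ℂ) : Prop :=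
  ρ.PosSemidef ∧ ρ.trace = 1

/-- An observable: an orthogonal projection (Hermitian idempotent). -/
def IsObservable (P : Matrix (Fin D) (Fin D) ℂ) : Prop :=
  P.IsHermitian ∧ P * P = P

/-- Orthogonal projection `Π_S` onto the energy shell spanned by `{e n : n ∈ S}`. -/
noncomputable def shellProj (S : Finset (Fin D)) : Matrix (Fin D) (Fin D) ℂ :=
  Matrix.diagonal fun n => if n ∈ S then 1 else 0

/-- A state is supported on the shell of `S`: `Π_S ρ Π_S = ρ`. -/
def SupportedOn (S : Finset (Fin D)) (ρ : Matrix (Fin D) (Fin D) ℂ) : Prop :=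
  shellProj S * ρ * shellProj S = ρ

/-- Thermal value `⟨P⟩_S = Tr(P Π_S)/d` (a real number: trace of Hermitian products below). -/
noncomputable def thermVal (S : Finset (Fin D)) (P : Matrix (Fin D) (Fin D) ℂ) : ℝ :=
  (P * shellProj S).trace.re / S.card

/-- Fourier transform `w̃(E) = ∫ w(t) exp(-iEt) dt` of a weight function. -/
noncomputable def fourier (w : ℝ → ℝ) (En : ℝ) : ℂ :=
  ∫ t : ℝ, (w t : ℂ) * Complex.exp (-(Complex.I) * En * t)

/-- A weight function: integrable, nonnegative, normalized to `∫ w = 1`. -/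
structure IsWeight (w : ℝ → ℝ) : Prop where
  integrable : Integrable w
  nonneg : ∀ t, 0 ≤ w t
  normalized : (∫ t : ℝ, w t) = 1

/-- A completely positive weight: a weight function whose Fourier transform is a
nonnegative real number everywhere. -/
structure IsCPWeight (w : ℝ → ℝ) extends IsWeight w : Prop where
  fourier_im : ∀ En : ℝ, (fourier w En).im = 0
  fourier_nonneg : ∀ En : ℝ, 0 ≤ (fourier w En).re

/-- The matrix element `⟨e n, (P - ⟨P⟩_S · 1) e m⟩ = ⟨e n, P e m⟩ - ⟨P⟩_S δ_{nm}`. -/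
noncomputable def devEl (S : Finset (Fin D)) (P : Matrix (Fin D) (Fin D) ℂ)
    (n m : Fin D) : ℂ :=
  P n m - if n = m then (thermVal S P : ℂ) else 0

/-- Band variance `Σ_{n,m ∈ S, |E n - E m| < ΔE} |⟨e n, P e m⟩ - ⟨P⟩_S δ_{nm}|²`. -/
noncomputable def bandVar (S : Finset (Fin D)) (E : Fin D → ℝ) (ΔE : ℝ)
    (P : Matrix (Fin D) (Fin D) ℂ) : ℝ :=
  ∑ n ∈ S, ∑ m ∈ S,
    if |E n - E m| < ΔE then ‖devEl S P n m‖ ^ 2 else 0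

/-- Energy-band thermalization in the shell `S` with bandwidth `ΔE` and accuracy `ε`. -/
def EnergyBandTherm (S : Finset (Fin D)) (E : Fin D → ℝ) (ΔE ε : ℝ)
    (P : Matrix (Fin D) (Fin D) ℂ) : Prop :=
  (1 / (S.card : ℝ)) * bandVar S E ΔE P < ε ^ 2

/-- Expectation value `⟨v, P v⟩` of an operator in a vector. -/
noncomputable def expVal (P : Matrix (Fin D) (Fin D) ℂ) (v : Fin D → ℂ) : ℂ :=
  dotProduct (star v) (P.mulVec v)


private lemma avg_exp_aux (ω : ℝ) :
    Tendsto (fun T : ℝ => (1 / (2 * T) : ℝ) • ∫ t in (-T)..T, Complex.exp (-(Complex.I) * ω * t))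
      atTop (nhds (if ω = 0 then 1 else 0)) := by
  by_cases h : ω = 0
  · simp only [h, if_true]
    apply Tendsto.congr' _ tendsto_const_nhds
    filter_upwards [eventually_gt_atTop (0:ℝ)] with T hT
    simp only [Complex.ofReal_zero, mul_zero, zero_mul, Complex.exp_zero,
      intervalIntegral.integral_const, sub_neg_eq_add, smul_smul]
    rw [show (1 / (2 * T)) * (T + T) = 1 by field_simp; ring, one_smul]
  · simp only [h, if_false]
    have hc : -(Complex.I) * (ω:ℂ) ≠ 0 := by
      simp [Complex.I_ne_zero, Complex.ofReal_eq_zero, h]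
    have key : ∀ T : ℝ, (∫ t in (-T)..T, Complex.exp (-(Complex.I) * ω * t))
        = (Complex.exp (-(Complex.I)*ω*T) - Complex.exp (-(Complex.I)*ω*(-T))) / (-(Complex.I)*ω) := by
      intro T
      have := integral_exp_mul_complex (a := -T) (b := T) (c := -(Complex.I)*ω) hc
      simpa [mul_assoc] using this
    have hexp : ∀ s : ℂ, s.re = 0 → ‖Complex.exp s‖ ≤ 1 := by
      intro s hs
      rw [Complex.norm_exp, hs, Real.exp_zero]
    have hω : 0 < |ω| := abs_pos.mpr h
    have hb : ∀ᶠ T in atTop, ‖(1 / (2 * T) : ℝ) • ∫ t in (-T)..T, Complex.exp (-(Complex.I) * ω * t)‖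
        ≤ (fun T : ℝ => T⁻¹ * |ω|⁻¹) T := by
      filter_upwards [eventually_gt_atTop (0:ℝ)] with T hT
      rw [key T, norm_smul]
      have hre : ∀ s : ℝ, (-(Complex.I)*(ω:ℂ)*(s:ℂ)).re = 0 := by intro s; simp
      have h1 : ‖Complex.exp (-(Complex.I)*ω*(T:ℂ)) - Complex.exp (-(Complex.I)*ω*((-T:ℝ):ℂ))‖ ≤ 2 := by
        calc _ ≤ ‖Complex.exp (-(Complex.I)*ω*(T:ℂ))‖ + ‖Complex.exp (-(Complex.I)*ω*((-T:ℝ):ℂ))‖ :=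
              norm_sub_le _ _
          _ ≤ 2 := by
              have := hexp _ (hre T); have := hexp _ (hre (-T)); push_cast at *; linarith
      have hnc : ‖(-(Complex.I)*(ω:ℂ))‖ = |ω| := by
        simp [norm_mul]
      rw [Real.norm_eq_abs, abs_of_pos (by positivity : (0:ℝ) < 1/(2*T)), norm_div, hnc]
      push_cast at h1 ⊢
      calc 1/(2*T) * (‖Complex.exp (-(Complex.I)*ω*(T:ℂ)) - Complex.exp (-(Complex.I)*ω*(-(T:ℂ)))‖ / |ω|)
          ≤ 1/(2*T) * (2 / |ω|) := by
            apply mul_le_mul_of_nonneg_left _ (by positivity)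
            exact div_le_div_of_nonneg_right h1 hω.le
        _ = T⁻¹ * |ω|⁻¹ := by field_simp
    have hg : Tendsto (fun T : ℝ => T⁻¹ * |ω|⁻¹) atTop (nhds 0) := by
      simpa using tendsto_inv_atTop_zero.mul_const |ω|⁻¹
    exact squeeze_zero_norm' hb hg

private lemma trace_evolve_aux (E : Fin D → ℝ) (ρ PiA : Matrix (Fin D) (Fin D) ℂ) (t : ℝ) :
    (evolve E t ρ * PiA).trace
      = ∑ n : Fin D, ∑ m : Fin D,
          Complex.exp (-(Complex.I) * ((E n - E m : ℝ) : ℂ) * (t : ℂ)) * (ρ n m * PiA m n) := by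
  have hev : evolve E t ρ = Matrix.of fun n m =>
      Complex.exp (-(Complex.I) * ((E n - E m : ℝ) : ℂ) * (t : ℂ)) * ρ n m := by
    ext n m
    simp only [evolve, U, Matrix.mul_diagonal, Matrix.diagonal_mul, Matrix.of_apply,
      ← Complex.exp_add]
    rw [mul_comm, ← mul_assoc, ← Complex.exp_add]
    congr 1
    push_cast
    ring_nf
  rw [hev, Matrix.trace]
  simp only [Matrix.diag, Matrix.mul_apply, Matrix.of_apply]
  exact Finset.sum_congr rfl fun n _ => Finset.sum_congr rfl fun m _ => mul_assoc _ _ _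

/-- **The infinite-time average of `Tr(ρ(t) Π_A)` converges and equals the degenerate sum.**
For a state `ρ` and an observable `Π_A` on `ℂ^D`, as `T → ∞` the time average
`(1/(2T)) ∫_{-T}^{T} Tr(ρ(t) Π_A) dt` converges to
`Σ_{(n,m) : E n = E m} ⟨e n, ρ (e m)⟩ · ⟨e m, Π_A (e n)⟩`
(the sum over all pairs with equal eigenvalues, including `n = m`). -/
theorem infinite_time_average_eq_degenerate_sum
    {D : ℕ} (hD : 0 < D) (E : Fin D → ℝ)
    (ρ PiA : Matrix (Fin D) (Fin D) ℂ)
    (hρ : IsState ρ) (hPiA : IsObservable PiA) :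
    Filter.Tendsto
      (fun T : ℝ => (1 / (2 * T) : ℝ) • ∫ t in (-T)..T, (evolve E t ρ * PiA).trace)
      Filter.atTop
      (nhds (∑ n : Fin D, ∑ m : Fin D, if E n = E m then ρ n m * PiA m n else 0)) := by
  have hfun : ∀ T : ℝ,
      (1 / (2 * T) : ℝ) • ∫ t in (-T)..T, (evolve E t ρ * PiA).trace
        = ∑ n : Fin D, ∑ m : Fin D,
            ((1 / (2 * T) : ℝ) •
              ∫ t in (-T)..T, Complex.exp (-(Complex.I) * ((E n - E m : ℝ) : ℂ) * t))
              * (ρ n m * PiA m n) := by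
    intro T
    have hcont : ∀ (n m : Fin D), Continuous
        (fun t : ℝ => Complex.exp (-(Complex.I) * ((E n - E m : ℝ) : ℂ) * t) * (ρ n m * PiA m n)) :=
      fun n m => (Complex.continuous_exp.comp (by fun_prop)).mul continuous_const
    have hint : ∀ (n m : Fin D), IntervalIntegrable
        (fun t : ℝ => Complex.exp (-(Complex.I) * ((E n - E m : ℝ) : ℂ) * t) * (ρ n m * PiA m n))
        volume (-T) T := fun n m => (hcont n m).intervalIntegrable _ _
    rw [intervalIntegral.integral_congr (g := fun t : ℝ => ∑ n : Fin D, ∑ m : Fin D,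
        Complex.exp (-(Complex.I) * ((E n - E m : ℝ) : ℂ) * t) * (ρ n m * PiA m n))
        (fun t _ => trace_evolve_aux E ρ PiA t)]
    rw [intervalIntegral.integral_finset_sum (μ := volume)
        (f := fun (n : Fin D) (t : ℝ) => ∑ m : Fin D,
          Complex.exp (-(Complex.I) * ((E n - E m : ℝ) : ℂ) * t) * (ρ n m * PiA m n))
        (fun n _ => (continuous_finset_sum _ (fun m _ => hcont n m)).intervalIntegrable _ _)]
    rw [Finset.smul_sum]
    refine Finset.sum_congr rfl fun n _ => ?_
    rw [intervalIntegral.integral_finset_sum (μ := volume) (fun m _ => hint n m), Finset.smul_sum]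
    refine Finset.sum_congr rfl fun m _ => ?_
    rw [intervalIntegral.integral_mul_const, smul_mul_assoc]
  rw [show (fun T : ℝ => (1 / (2 * T) : ℝ) • ∫ t in (-T)..T, (evolve E t ρ * PiA).trace)
      = fun T : ℝ => ∑ n : Fin D, ∑ m : Fin D,
          ((1 / (2 * T) : ℝ) •
            ∫ t in (-T)..T, Complex.exp (-(Complex.I) * ((E n - E m : ℝ) : ℂ) * t))
            * (ρ n m * PiA m n) from funext hfun]
  apply tendsto_finset_sum
  intro n _
  apply tendsto_finset_sum
  intro m _
  have h := (avg_exp_aux (E n - E m)).mul_const (ρ n m * PiA m n)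
  have heq : (if (E n - E m : ℝ) = 0 then (1:ℂ) else 0) * (ρ n m * PiA m n)
      = (if E n = E m then ρ n m * PiA m n else 0) := by
    by_cases hE : E n = E m
    · simp [hE, sub_eq_zero.mpr hE]
    · rw [if_neg (fun hs => hE (sub_eq_zero.mp hs)), if_neg hE, zero_mul]
  rwa [heq] at h

end QET
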